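/- If G is a finite simple 2-connected chordal graph, then the Helly number of G with respect to Δ-convexity satisfies h_Δ(G) = max{2, α(G)}. -/

import Mathlib

variable {V : Type*}

/-- A set `S` is Δ-convex in `G` if every vertex adjacent to two adjacent vertices of `S`
belongs to `S`. -/
def DeltaConvex (G : SimpleGraph V) (S : Set V) : Prop :=
  ∀ ⦃u v w : V⦄, u ∈ S → v ∈ S → G.Adj u v → G.Adj w u → G.Adj w v → w ∈ S

/-- The Δ-convex hull of `S`: the smallest Δ-convex set containing `S`. -/
def deltaHull (G : SimpleGraph V) (S : Set V) : Set V :=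
  ⋂₀ {T : Set V | S ⊆ T ∧ DeltaConvex G T}

/-- `S` is Helly independent: the intersection of the hulls of the sets `S \ {a}`, `a ∈ S`,
is empty. -/
def HellyIndep (G : SimpleGraph V) (S : Set V) : Prop :=
  (⋂ a ∈ S, deltaHull G (S \ {a})) = ∅

/-- The Helly number of `G` w.r.t. Δ-convexity: the maximum cardinality of a Helly
independent subset of the vertex set. -/
noncomputable def hellyNumber (G : SimpleGraph V) : ℕ :=
  sSup {n : ℕ | ∃ S : Set V, HellyIndep G S ∧ S.ncard = n}

/-- `S` is Radon independent: no partition of `S` into two nonempty disjoint parts has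
intersecting hulls. -/
def RadonIndep (G : SimpleGraph V) (S : Set V) : Prop :=
  ¬ ∃ S₁ S₂ : Set V, S₁ ∪ S₂ = S ∧ Disjoint S₁ S₂ ∧ S₁.Nonempty ∧ S₂.Nonempty ∧
    (deltaHull G S₁ ∩ deltaHull G S₂).Nonempty

/-- The Radon number of `G` w.r.t. Δ-convexity. -/
noncomputable def radonNumber (G : SimpleGraph V) : ℕ :=
  sSup {n : ℕ | ∃ S : Set V, RadonIndep G S ∧ S.ncard = n}

/-- `S` is convexly independent: `a ∉ ⟨S \ {a}⟩` for every `a ∈ S`. -/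
def ConvIndep (G : SimpleGraph V) (S : Set V) : Prop :=
  ∀ a ∈ S, a ∉ deltaHull G (S \ {a})

/-- The rank of `G` w.r.t. Δ-convexity. -/
noncomputable def rankDelta (G : SimpleGraph V) : ℕ :=
  sSup {n : ℕ | ∃ S : Set V, ConvIndep G S ∧ S.ncard = n}

/-- The independence number: maximum cardinality of a set of pairwise non-adjacent
vertices. -/
noncomputable def alphaNum (G : SimpleGraph V) : ℕ :=
  sSup {n : ℕ | ∃ S : Set V, S.Pairwise (fun a b => ¬ G.Adj a b) ∧ S.ncard = n}

/-- `G` is 2-connected: at least 3 vertices, connected, and deleting any single vertex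
leaves a connected graph. -/
def TwoConnected (G : SimpleGraph V) : Prop :=
  3 ≤ Nat.card V ∧ G.Connected ∧ ∀ v : V, (G.induce {u : V | u ≠ v}).Connected

/-- `G` is chordal: every cycle of length at least 4 has a chord, i.e. an edge of `G`
joining two vertices of the cycle that is not an edge of the cycle. -/
def ChordalGraph (G : SimpleGraph V) : Prop :=
  ∀ (v : V) (c : G.Walk v v), c.IsCycle → 4 ≤ c.length →
    ∃ x y : V, x ∈ c.support ∧ y ∈ c.support ∧ G.Adj x y ∧ s(x, y) ∉ c.edges

/-- `B` induces a connected subgraph of `G` with at least two vertices and no cut vertex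
(so: an edge, or a 2-connected subgraph). -/
def NoCutSet (G : SimpleGraph V) (B : Set V) : Prop :=
  2 ≤ B.ncard ∧ (G.induce B).Connected ∧ ∀ v ∈ B, (G.induce (B \ {v})).Connected

/-- `B` is (the vertex set of) a block of `G`: a maximal 2-connected subgraph, where a
bridge together with its endpoints also counts as a block. -/
def IsBlock (G : SimpleGraph V) (B : Set V) : Prop :=
  NoCutSet G B ∧ ∀ B' : Set V, NoCutSet G B' → B ⊆ B' → B = B'

/-- The set `B` induces a complete subgraph of `G`. -/
def CompleteOn (G : SimpleGraph V) (B : Set V) : Prop :=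
  ∀ u ∈ B, ∀ v ∈ B, u ≠ v → G.Adj u v


section AuxiliaryLemmas

open SimpleGraph

variable (G : SimpleGraph V)

lemma subset_deltaHull (S : Set V) : S ⊆ deltaHull G S := fun _ hx _ hT => hT.1 hx

lemma deltaHull_convex (S : Set V) : DeltaConvex G (deltaHull G S) := by
  intro u v w hu hv huv hwu hwv T hT
  exact hT.2 (hu T hT) (hv T hT) huv hwu hwv

lemma deltaHull_min {S T : Set V} (hST : S ⊆ T) (hT : DeltaConvex G T) : deltaHull G S ⊆ T :=
  Set.sInter_subset_of_mem ⟨hST, hT⟩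

lemma convex_of_indep {S : Set V} (h : S.Pairwise fun a b => ¬ G.Adj a b) : DeltaConvex G S :=
  fun u v _ hu hv huv _ _ => absurd huv (h hu hv huv.ne)

lemma deltaHull_of_convex {S : Set V} (h : DeltaConvex G S) : deltaHull G S = S :=
  Set.Subset.antisymm (deltaHull_min G le_rfl h) (subset_deltaHull G S)

lemma hull_walk {u v : V} (huv : G.Adj u v) :
    ∀ x ∈ deltaHull G {u, v}, ∃ p : G.Walk u x, ∀ z ∈ p.support, z ∈ deltaHull G {u, v} := by
  set H := deltaHull G {u, v} with hH
  have hHconv := deltaHull_convex G {u, v}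
  set H' : Set V := {x | x ∈ H ∧ ∃ p : G.Walk u x, ∀ z ∈ p.support, z ∈ H} with hH'
  have hu : u ∈ H := subset_deltaHull G _ (by simp)
  have hv : v ∈ H := subset_deltaHull G _ (by simp)
  have hsub : ({u, v} : Set V) ⊆ H' := by
    rintro x (rfl | rfl)
    · exact ⟨hu, Walk.nil, by simp [hu]⟩
    · refine ⟨hv, Walk.cons huv Walk.nil, ?_⟩
      intro z hz
      simp only [Walk.support_cons, Walk.support_nil, List.mem_cons, List.mem_singleton] at hz
      rcases hz with rfl | rfl | h
      · exact hu
      · exact hv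
      · simp at h
  have hconv' : DeltaConvex G H' := by
    intro p q w hp hq hpq hwp hwq
    have hwH : w ∈ H := hHconv hp.1 hq.1 hpq hwp hwq
    obtain ⟨pw, hpw⟩ := hp.2
    refine ⟨hwH, pw.concat hwp.symm, ?_⟩
    intro z hz
    rw [Walk.support_concat, List.mem_append, List.mem_singleton] at hz
    rcases hz with hz | rfl
    · exact hpw z hz
    · exact hwH
  intro x hx
  exact (deltaHull_min G hsub hconv' hx).2

lemma exists_boundary {H : Set V} {x y : V} (p : G.Walk x y) :
    x ∉ H → y ∈ H → ∃ w h, G.Adj w h ∧ w ∉ H ∧ h ∈ H := by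
  induction p with
  | nil => intro hx hy; exact absurd hy hx
  | @cons a b c h p ih =>
    intro hx hy
    by_cases hb : b ∈ H
    · exact ⟨a, b, h, hx, hb⟩
    · exact ih hb hy

lemma walk_induce_to_walk {s : Set V} {x y : s} (p : (G.induce s).Walk x y) :
    ∃ q : G.Walk x.1 y.1, ∀ z ∈ q.support, z ∈ s := by
  induction p with
  | nil => exact ⟨SimpleGraph.Walk.nil, by simp⟩
  | @cons a b c h p ih =>
    obtain ⟨q, hq⟩ := ih
    refine ⟨SimpleGraph.Walk.cons (by simpa using h) q, ?_⟩
    intro z hz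
    rw [SimpleGraph.Walk.support_cons, List.mem_cons] at hz
    rcases hz with rfl | hz
    · exact a.2
    · exact hq z hz

lemma exists_first_edge {a c : V} (p : G.Walk a c) (h : ¬ p.Nil) :
    ∃ x, G.Adj a x ∧ x ∈ p.support ∧ s(a, x) ∈ p.edges := by
  cases p with
  | nil => simp at h
  | cons h' q =>
    exact ⟨_, h', by simp [Walk.support_cons, q.start_mem_support], by simp⟩

lemma closed_mem_tail {a : V} (C : G.Walk a a) (hC : ¬ C.Nil) {z : V}
    (hz : z ∈ C.support) : z ∈ C.support.tail := by
  cases C with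
  | nil => simp at hC
  | cons h p =>
    simp only [Walk.support_cons, List.tail_cons]
    simp only [Walk.support_cons, List.mem_cons] at hz
    rcases hz with rfl | hz
    · exact p.end_mem_support
    · exact hz

lemma edge_mem_of_length_one {a b : V} (p : G.Walk a b) (h : p.length = 1) :
    s(a, b) ∈ p.edges := by
  match p with
  | .nil => simp at h
  | .cons had q =>
    match q with
    | .nil => simp
    | .cons _ _ => simp [Walk.length_cons] at h

lemma cycle_split [DecidableEq V] {x : V} (C : G.Walk x x) (hC : C.IsCycle) {y : V}
    (hy : y ∈ C.support) (hne : x ≠ y) (hxy : G.Adj x y) (hchord : s(x, y) ∉ C.edges) :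
    (Walk.cons hxy.symm (C.takeUntil y hy)).IsCycle ∧
      (Walk.cons hxy (C.dropUntil y hy)).IsCycle ∧
      (C.takeUntil y hy).length + 1 < C.length ∧ (C.dropUntil y hy).length + 1 < C.length := by
  set d1 := C.takeUntil y hy with hd1
  set d2 := C.dropUntil y hy with hd2
  have hspec : d1.append d2 = C := C.take_spec hy
  have hlensum : d1.length + d2.length = C.length := by
    rw [← hspec, Walk.length_append]
  have htail : C.support.tail = d1.support.tail ++ d2.support.tail := by
    rw [← hspec, Walk.tail_support_append]
  have hnodup : C.support.tail.Nodup := hC.2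
  rw [htail, List.nodup_append] at hnodup
  obtain ⟨hn1, hn2, hdisj⟩ := hnodup
  have hlen1 : 1 ≤ d1.length := by
    rcases Nat.eq_zero_or_pos d1.length with h0 | h
    · exact absurd (Walk.eq_of_length_eq_zero h0) hne
    · exact h
  have hlen2 : 1 ≤ d2.length := by
    rcases Nat.eq_zero_or_pos d2.length with h0 | h
    · exact absurd (Walk.eq_of_length_eq_zero h0) hne.symm
    · exact h
  have hlen1' : d1.length ≠ 1 := by
    intro h1
    exact hchord (Walk.edges_takeUntil_subset C hy (edge_mem_of_length_one G _ h1))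
  have hlen2' : d2.length ≠ 1 := by
    intro h1
    have := Walk.edges_dropUntil_subset C hy (edge_mem_of_length_one G _ h1)
    rw [Sym2.eq_swap] at this
    exact hchord this
  have hy1 : y ∈ d1.support.tail := Walk.end_mem_tail_support_of_ne hne d1
  have hx2 : x ∈ d2.support.tail := Walk.end_mem_tail_support_of_ne hne.symm d2
  have hp1 : d1.IsPath := by
    rw [Walk.isPath_def, Walk.support_eq_cons, List.nodup_cons]
    exact ⟨fun hmem => hdisj _ hmem _ hx2 rfl, hn1⟩
  have hp2 : d2.IsPath := by
    rw [Walk.isPath_def, Walk.support_eq_cons, List.nodup_cons]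
    exact ⟨fun hmem => hdisj _ hy1 _ hmem rfl, hn2⟩
  have he2 : s(x, y) ∉ d2.edges := fun h => hchord (Walk.edges_dropUntil_subset C hy h)
  refine ⟨?_, ?_, by omega, by omega⟩
  · rw [Walk.cons_isCycle_iff]
    refine ⟨hp1, ?_⟩
    rw [Sym2.eq_swap]
    exact fun h => hchord (Walk.edges_takeUntil_subset C hy h)
  · rw [Walk.cons_isCycle_iff]
    exact ⟨hp2, he2⟩

lemma no_bad_cycle [DecidableEq V] {H : Set V} (hconv : DeltaConvex G H)
    (hch : ChordalGraph G) :
    ∀ n : ℕ, ∀ {a : V} (C : G.Walk a a), C.length ≤ n → C.IsCycle →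
      (∃ x y : V, x ∈ H ∧ y ∈ H ∧ s(x, y) ∈ C.edges) →
      (∃ z ∈ C.support, z ∉ H) → False := by
  intro n
  induction n with
  | zero =>
    intro a C hlen hC _ _
    have := hC.three_le_length
    omega
  | succ n ih =>
    intro a C hlen hC hedge hout
    by_cases hle : C.length ≤ n
    · exact ih C hle hC hedge hout
    have h3 := hC.three_le_length
    by_cases h4 : 4 ≤ C.length
    · obtain ⟨x, y, hxs, hys, hxy, hchord⟩ := hch a C hC h4
      have hnxy : x ≠ y := hxy.ne
      have hC1 := hC.rotate hxs
      set C1 := C.rotate x hxs with hC1def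
      have hnotnil : ¬ C.Nil := hC.not_nil
      have htailmem : ∀ z ∈ C.support, z ∈ C1.support := by
        intro z hz
        have := (Walk.support_rotate C x hxs).perm.mem_iff.2 (closed_mem_tail G C hnotnil hz)
        exact List.mem_of_mem_tail this
      have hedges : ∀ e, e ∈ C1.edges ↔ e ∈ C.edges := fun e =>
        (Walk.rotate_edges C x hxs).perm.mem_iff
      have hlenrot : C1.length = C.length := by
        have := (Walk.rotate_edges C x hxs).perm.length_eq
        rwa [Walk.length_edges, Walk.length_edges] at this
      have hy1 : y ∈ C1.support := htailmem y hys
      obtain ⟨hcyc1, hcyc2, hlt1, hlt2⟩ :=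
        cycle_split G C1 hC1 hy1 hnxy hxy (fun h => hchord ((hedges _).1 h))
      set d1 := C1.takeUntil y hy1 with hd1def
      set d2 := C1.dropUntil y hy1 with hd2def
      have hmem_split : ∀ z ∈ C1.support, z ∈ d1.support ∨ z ∈ d2.support := by
        intro z hz
        rw [← C1.take_spec hy1, Walk.mem_support_append_iff] at hz
        exact hz
      have hedge_split : ∀ e ∈ C1.edges, e ∈ d1.edges ∨ e ∈ d2.edges := by
        intro e he
        rw [← C1.take_spec hy1, Walk.edges_append, List.mem_append] at he
        exact he
      have hlen1 : (Walk.cons hxy.symm d1).length ≤ n := by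
        rw [Walk.length_cons]; omega
      have hlen2 : (Walk.cons hxy d2).length ≤ n := by
        rw [Walk.length_cons]; omega
      by_cases hbothH : x ∈ H ∧ y ∈ H
      · obtain ⟨z, hzs, hzH⟩ := hout
        rcases hmem_split z (htailmem z hzs) with hz1 | hz2
        · refine ih (Walk.cons hxy.symm d1) hlen1 hcyc1 ⟨y, x, hbothH.2, hbothH.1, ?_⟩
            ⟨z, ?_, hzH⟩
          · simp
          · rw [Walk.support_cons]; exact List.mem_cons_of_mem _ hz1
        · refine ih (Walk.cons hxy d2) hlen2 hcyc2 ⟨x, y, hbothH.1, hbothH.2, ?_⟩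
            ⟨z, ?_, hzH⟩
          · simp
          · rw [Walk.support_cons]; exact List.mem_cons_of_mem _ hz2
      · have hbad : ∃ b : V, b ∉ H ∧ b ∈ (Walk.cons hxy.symm d1).support ∧
            b ∈ (Walk.cons hxy d2).support := by
          rcases not_and_or.1 hbothH with hxH | hyH
          · refine ⟨x, hxH, ?_, ?_⟩
            · rw [Walk.support_cons]; exact List.mem_cons_of_mem _ d1.start_mem_support
            · rw [Walk.support_cons]; exact List.mem_cons_self
          · refine ⟨y, hyH, ?_, ?_⟩
            · rw [Walk.support_cons]; exact List.mem_cons_self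
            · rw [Walk.support_cons]; exact List.mem_cons_of_mem _ d2.start_mem_support
        obtain ⟨b, hbH, hb1, hb2⟩ := hbad
        obtain ⟨p, q, hpH, hqH, hpq⟩ := hedge
        rcases hedge_split _ ((hedges _).2 hpq) with he1 | he2
        · refine ih (Walk.cons hxy.symm d1) hlen1 hcyc1 ⟨p, q, hpH, hqH, ?_⟩ ⟨b, hb1, hbH⟩
          rw [Walk.edges_cons]; exact List.mem_cons_of_mem _ he1
        · refine ih (Walk.cons hxy d2) hlen2 hcyc2 ⟨p, q, hpH, hqH, ?_⟩ ⟨b, hb2, hbH⟩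
          rw [Walk.edges_cons]; exact List.mem_cons_of_mem _ he2
    · have hlen3 : C.length = 3 := by omega
      clear hle hlen h3 h4
      cases C with
      | nil => simp at hlen3
      | cons h1 p =>
        rename_i b
        cases p with
        | nil => simp at hlen3
        | cons h2 q =>
          rename_i c
          cases q with
          | nil => simp at hlen3
          | cons h3 r =>
            rename_i d
            cases r with
            | cons h4 s => simp [Walk.length_cons] at hlen3
            | nil =>
              obtain ⟨x, y, hxH, hyH, hmem⟩ := hedge
              have habc : a ∈ H ∧ b ∈ H ∧ c ∈ H := by
                simp only [Walk.edges_cons, Walk.edges_nil, List.mem_cons,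
                  List.not_mem_nil, or_false, Sym2.eq_iff] at hmem
                rcases hmem with (⟨rfl, rfl⟩ | ⟨rfl, rfl⟩) | (⟨rfl, rfl⟩ | ⟨rfl, rfl⟩) |
                  (⟨rfl, rfl⟩ | ⟨rfl, rfl⟩)
                · exact ⟨hxH, hyH, hconv hxH hyH h1 h3 h2.symm⟩
                · exact ⟨hyH, hxH, hconv hyH hxH h1 h3 h2.symm⟩
                · exact ⟨hconv hxH hyH h2 h1 h3.symm, hxH, hyH⟩
                · exact ⟨hconv hyH hxH h2 h1 h3.symm, hyH, hxH⟩
                · exact ⟨hyH, hconv hxH hyH h3 h2 h1.symm, hxH⟩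
                · exact ⟨hxH, hconv hyH hxH h3 h2 h1.symm, hyH⟩
              obtain ⟨z, hzs, hzH⟩ := hout
              simp only [Walk.support_cons, Walk.support_nil, List.mem_cons,
                List.mem_singleton, List.not_mem_nil, or_false] at hzs
              rcases hzs with rfl | rfl | rfl | rfl
              · exact hzH habc.1
              · exact hzH habc.2.1
              · exact hzH habc.2.2
              · exact hzH habc.1

lemma hull_edge_eq_univ (h2 : TwoConnected G) (hch : ChordalGraph G)
    {u v : V} (huv : G.Adj u v) : deltaHull G {u, v} = Set.univ := by
  classical
  set H := deltaHull G {u, v} with hHdef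
  have hconv : DeltaConvex G H := deltaHull_convex G _
  have hu : u ∈ H := subset_deltaHull G _ (by simp)
  have hv : v ∈ H := subset_deltaHull G _ (by simp)
  by_contra hne
  obtain ⟨w0, hw0⟩ : ∃ w0, w0 ∉ H := by
    by_contra hall
    push_neg at hall
    exact hne (Set.eq_univ_iff_forall.2 hall)
  obtain ⟨p0⟩ := h2.2.1.preconnected w0 u
  obtain ⟨w, b, hwb, hwH, hbH⟩ := exists_boundary G p0 hw0 hu
  set t : V := if b = u then v else u with ht
  have htH : t ∈ H := by
    by_cases h : b = u <;> simp [ht, h, hu, hv]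
  have htb : t ≠ b := by
    by_cases h : b = u
    · rw [ht, if_pos h, h]
      exact huv.ne'
    · simp only [ht, if_neg h]
      exact fun h' => h h'.symm
  have hwb' : w ≠ b := fun h => hwH (h ▸ hbH)
  obtain ⟨q⟩ := (h2.2.2 b).preconnected ⟨w, hwb'⟩ ⟨t, htb⟩
  obtain ⟨q0, hq0⟩ := walk_induce_to_walk G q
  have hex : ∃ n, ∃ y : V, y ∈ H ∧ ∃ p : G.Walk w y, p.IsPath ∧
      (∀ z ∈ p.support, z ≠ b) ∧ p.length = n := by
    refine ⟨q0.bypass.length, t, htH, q0.bypass, q0.bypass_isPath, ?_, rfl⟩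
    intro z hz
    exact hq0 z (q0.support_bypass_subset hz)
  obtain ⟨y0, hy0H, p, hpPath, hpb, hplen⟩ := Nat.find_spec hex
  have hwy0 : w ≠ y0 := fun h => hwH (h ▸ hy0H)
  have hint : ∀ z ∈ p.support, z ≠ y0 → z ∉ H := by
    intro z hz hzy0 hzH
    have hdrop : 1 ≤ (p.dropUntil z hz).length := by
      rcases Nat.eq_zero_or_pos (p.dropUntil z hz).length with h0 | h
      · exact absurd (Walk.eq_of_length_eq_zero h0) hzy0
      · exact h
    have hlt : (p.takeUntil z hz).length < Nat.find hex := by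
      have := congrArg Walk.length (p.take_spec hz)
      rw [Walk.length_append] at this
      omega
    exact Nat.find_min hex hlt ⟨z, hzH, p.takeUntil z hz, hpPath.takeUntil hz,
      fun x hx => hpb x (p.support_takeUntil_subset hz hx), rfl⟩
  obtain ⟨p1, hp1⟩ := hull_walk G huv y0 hy0H
  obtain ⟨p2, hp2⟩ := hull_walk G huv b hbH
  set Q := (p1.reverse.append p2).bypass with hQ
  have hQpath : Q.IsPath := Walk.bypass_isPath _
  have hQsup : ∀ z ∈ Q.support, z ∈ H := by
    intro z hz
    have hz' := Walk.support_bypass_subset _ hz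
    rcases (Walk.mem_support_append_iff _ _).1 hz' with h | h
    · exact hp1 z (by rwa [Walk.support_reverse, List.mem_reverse] at h)
    · exact hp2 z h
  have hy0b : y0 ≠ b := hpb y0 p.end_mem_support
  have hadj : G.Adj b w := hwb.symm
  set PQ := p.append Q with hPQ
  have hPQpath : PQ.IsPath := by
    rw [Walk.isPath_def, hPQ, Walk.support_append, List.nodup_append]
    refine ⟨hpPath.support_nodup, ?_, ?_⟩
    · have h' := hQpath.support_nodup
      rw [Walk.support_eq_cons, List.nodup_cons] at h'
      exact h'.2
    · intro z hz z' hz' hzz'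
      subst hzz'
      have hzH : z ∈ H := hQsup z (List.mem_of_mem_tail hz')
      have hzy : z = y0 := by
        by_contra hne'
        exact hint z hz hne' hzH
      subst hzy
      have h' := hQpath.support_nodup
      rw [Walk.support_eq_cons, List.nodup_cons] at h'
      exact h'.1 hz'
  have hedge_notin : s(b, w) ∉ PQ.edges := by
    rw [hPQ, Walk.edges_append, List.mem_append]
    rintro (h | h)
    · exact hpb b (Walk.fst_mem_support_of_mem_edges p h) rfl
    · exact hwH (hQsup w (Walk.snd_mem_support_of_mem_edges Q h))
  have hCcyc : (Walk.cons hadj PQ).IsCycle :=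
    (Walk.cons_isCycle_iff PQ hadj).2 ⟨hPQpath, hedge_notin⟩
  have hQnotnil : ¬ Q.Nil := Walk.not_nil_of_ne hy0b
  obtain ⟨x1, hadj1, hx1sup, hx1e⟩ := exists_first_edge G Q hQnotnil
  refine no_bad_cycle G hconv hch (Walk.cons hadj PQ).length (Walk.cons hadj PQ) le_rfl hCcyc
    ⟨y0, x1, hy0H, hQsup x1 hx1sup, ?_⟩ ⟨w, ?_, hwH⟩
  · rw [Walk.edges_cons]
    refine List.mem_cons_of_mem _ ?_
    rw [hPQ, Walk.edges_append, List.mem_append]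
    exact Or.inr hx1e
  · rw [Walk.support_cons]
    refine List.mem_cons_of_mem _ ?_
    rw [hPQ]
    exact Walk.subset_support_append_left _ _ p.start_mem_support

lemma hellyIndep_of_indep {S : Set V} (hne : S.Nonempty)
    (h : S.Pairwise fun a b => ¬ G.Adj a b) : HellyIndep G S := by
  show (⋂ a ∈ S, deltaHull G (S \ {a})) = ∅
  rw [Set.eq_empty_iff_forall_notMem]
  intro x hx
  rw [Set.mem_iInter₂] at hx
  obtain ⟨a0, ha0⟩ := hne
  have h1 := hx a0 ha0
  rw [deltaHull_of_convex G (convex_of_indep G (h.mono Set.diff_subset))] at h1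
  have hxS : x ∈ S := h1.1
  have h2 := hx x hxS
  rw [deltaHull_of_convex G (convex_of_indep G (h.mono Set.diff_subset))] at h2
  exact h2.2 rfl

end AuxiliaryLemmas

/-- If `G` is a finite simple 2-connected chordal graph, then
`h_Δ(G) = max {2, α(G)}`. -/
theorem stmt_5 {V : Type*} [Fintype V] (G : SimpleGraph V)
    (h2 : TwoConnected G) (hch : ChordalGraph G) :
    hellyNumber G = max 2 (alphaNum G) := by
  classical
  have hcard3 : 3 ≤ Fintype.card V := by
    rw [← Nat.card_eq_fintype_card]
    exact h2.1
  have hVne : Nonempty V := Fintype.card_pos_iff.1 (by omega)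
  have hnontriv : Nontrivial V := Fintype.one_lt_card_iff_nontrivial.1 (by omega)
  obtain ⟨a0, b0, hab0⟩ := exists_pair_ne V
  have hbound : ∀ S : Set V, S.ncard ≤ Nat.card V := by
    intro S
    rw [← Set.ncard_univ]
    exact Set.ncard_le_ncard (Set.subset_univ S) (Set.toFinite _)
  have hBH : BddAbove {n : ℕ | ∃ S : Set V, HellyIndep G S ∧ S.ncard = n} := by
    refine ⟨Nat.card V, ?_⟩
    rintro n ⟨S, _, rfl⟩
    exact hbound S
  have hBA : BddAbove {n : ℕ | ∃ S : Set V,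
      S.Pairwise (fun a b => ¬ G.Adj a b) ∧ S.ncard = n} := by
    refine ⟨Nat.card V, ?_⟩
    rintro n ⟨S, _, rfl⟩
    exact hbound S
  have htwo : HellyIndep G {a0, b0} := by
    show (⋂ a ∈ ({a0, b0} : Set V), deltaHull G (({a0, b0} : Set V) \ {a})) = ∅
    rw [Set.biInter_pair, Set.pair_diff_left hab0, Set.pair_diff_right hab0,
      deltaHull_of_convex G (convex_of_indep G (Set.pairwise_singleton _ _)),
      deltaHull_of_convex G (convex_of_indep G (Set.pairwise_singleton _ _))]
    rw [Set.eq_empty_iff_forall_notMem]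
    rintro x ⟨h1, h2⟩
    rw [Set.mem_singleton_iff] at h1 h2
    exact hab0 (h2.symm.trans h1)
  have htwomem : (2 : ℕ) ∈ {n : ℕ | ∃ S : Set V, HellyIndep G S ∧ S.ncard = n} :=
    ⟨{a0, b0}, htwo, Set.ncard_pair hab0⟩
  have hulluniv : ∀ T : Set V, (∃ x ∈ T, ∃ y ∈ T, G.Adj x y) → deltaHull G T = Set.univ := by
    rintro T ⟨x, hx, y, hy, hxy⟩
    apply Set.eq_univ_of_univ_subset
    rw [← hull_edge_eq_univ G h2 hch hxy]
    refine deltaHull_min G ?_ (deltaHull_convex G T)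
    rintro z (rfl | rfl)
    · exact subset_deltaHull G T hx
    · exact subset_deltaHull G T hy
  show sSup {n : ℕ | ∃ S : Set V, HellyIndep G S ∧ S.ncard = n} = max 2 (alphaNum G)
  apply le_antisymm
  · apply csSup_le ⟨2, htwomem⟩
    rintro n ⟨S, hS, rfl⟩
    by_contra hgt
    push_neg at hgt
    rw [max_lt_iff] at hgt
    obtain ⟨hgt2, hgtα⟩ := hgt
    have hS' : (⋂ a ∈ S, deltaHull G (S \ {a})) = ∅ := hS
    have hmem_inter : ∀ x : V, (∀ a ∈ S, x ∈ deltaHull G (S \ {a})) → False := by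
      intro x hx
      have : x ∈ (⋂ a ∈ S, deltaHull G (S \ {a})) := Set.mem_iInter₂.2 hx
      rw [hS'] at this
      exact this
    -- S is not independent
    have hSnotind : ¬ S.Pairwise (fun a b => ¬ G.Adj a b) := by
      intro hind
      have : S.ncard ≤ alphaNum G := le_csSup hBA ⟨S, hind, rfl⟩
      omega
    rw [Set.Pairwise] at hSnotind
    push_neg at hSnotind
    obtain ⟨u, huS, v, hvS, hune, huv⟩ := hSnotind
    by_cases hAll : ∀ c ∈ S, ∃ x ∈ S \ {c}, ∃ y ∈ S \ {c}, G.Adj x y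
    · refine hmem_inter a0 ?_
      intro a ha
      rw [hulluniv _ (hAll a ha)]
      trivial
    · push_neg at hAll
      obtain ⟨c, hcS, hcind⟩ := hAll
      have hcv : DeltaConvex G (S \ {c}) :=
        convex_of_indep G (fun x hx y hy _ => by
          intro hadj
          exact hcind x hx y hy hadj)
      have hcuv : c = u ∨ c = v := by
        by_contra hcon
        push_neg at hcon
        exact hcind u ⟨huS, fun h => hcon.1 h.symm⟩ v ⟨hvS, fun h => hcon.2 h.symm⟩ huv
      obtain ⟨d, hdS, hdc, hcd⟩ : ∃ d, d ∈ S ∧ d ≠ c ∧ G.Adj c d := by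
        rcases hcuv with rfl | rfl
        · exact ⟨v, hvS, huv.ne', huv⟩
        · exact ⟨u, huS, huv.ne, huv.symm⟩
      by_cases hD : ∀ e ∈ S, e ≠ c → ∃ x ∈ S \ {e}, ∃ y ∈ S \ {e}, G.Adj x y
      · refine hmem_inter d ?_
        intro a ha
        by_cases hac : a = c
        · rw [hac, deltaHull_of_convex G hcv]
          exact ⟨hdS, hdc⟩
        · rw [hulluniv _ (hD a ha hac)]
          trivial
      · push_neg at hD
        obtain ⟨e, heS, hec, heind⟩ := hD
        have hev : DeltaConvex G (S \ {e}) :=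
          convex_of_indep G (fun x hx y hy _ => by
            intro hadj
            exact heind x hx y hy hadj)
        have heuv : e = u ∨ e = v := by
          by_contra hcon
          push_neg at hcon
          exact heind u ⟨huS, fun h => hcon.1 h.symm⟩ v ⟨hvS, fun h => hcon.2 h.symm⟩ huv
        have hce : G.Adj c e := by
          rcases hcuv with rfl | rfl <;> rcases heuv with rfl | rfl
          · exact absurd rfl hec
          · exact huv
          · exact huv.symm
          · exact absurd rfl hec
        have hsub : ({c, e} : Set V) ⊆ S := by
          rintro z (rfl | rfl)
          · exact hcS
          · exact heS
        have hdiffcard : (S \ {c, e}).ncard = S.ncard - 2 := by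
          rw [Set.ncard_diff hsub (Set.toFinite _), Set.ncard_pair (fun h => hec h.symm)]
        have hbne : (S \ ({c, e} : Set V)).Nonempty := by
          apply Set.nonempty_of_ncard_ne_zero
          omega
        obtain ⟨b, hbS, hbce⟩ := hbne
        have hbc : b ≠ c := fun h => hbce (by simp [h])
        have hbe : b ≠ e := fun h => hbce (by simp [h])
        refine hmem_inter b ?_
        intro a ha
        by_cases hac : a = c
        · rw [hac, deltaHull_of_convex G hcv]
          exact ⟨hbS, hbc⟩
        by_cases hae : a = e
        · rw [hae, deltaHull_of_convex G hev]
          exact ⟨hbS, hbe⟩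
        · rw [hulluniv (S \ {a}) ⟨c, ⟨hcS, fun h => hac h.symm⟩,
            e, ⟨heS, fun h => hae h.symm⟩, hce⟩]
          trivial
  · rw [max_le_iff]
    constructor
    · exact le_csSup hBH htwomem
    · set A := {n : ℕ | ∃ S : Set V,
        S.Pairwise (fun a b => ¬ G.Adj a b) ∧ S.ncard = n} with hA
      have hAne : A.Nonempty := ⟨0, ∅, Set.pairwise_empty _, by simp⟩
      have h1A : (1 : ℕ) ∈ A := ⟨{a0}, Set.pairwise_singleton _ _, Set.ncard_singleton _⟩
      have hα1 : 1 ≤ alphaNum G := le_csSup hBA h1A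
      have hαmem : alphaNum G ∈ A := Nat.sSup_mem hAne hBA
      obtain ⟨S, hSp, hScard⟩ := hαmem
      have hSne : S.Nonempty := by
        apply Set.nonempty_of_ncard_ne_zero
        omega
      exact le_csSup hBH ⟨S, hellyIndep_of_indep G hSne hSp, hScard⟩
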